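/- The Nerve Theorem for convex covers: if U_1, ..., U_m are convex open subsets of R^N covering X = ⋃ U_i, then X is homotopy equivalent to the geometric realization of the nerve N(U). -/

import Mathlib

/-- The nerve of a finite cover `U : Fin m → Set X`: the abstract simplicial
complex on vertex set `Fin m` whose simplices are the nonempty index sets `J`
with `⋂_{j ∈ J} U_j ≠ ∅`. -/
def nerve {m : ℕ} {X : Type*} (U : Fin m → Set X) : Set (Finset (Fin m)) :=
  {J | J.Nonempty ∧ (⋂ j ∈ J, U j).Nonempty}

/-- A geometric realization of the nerve of `U : Fin m → Set X` inside `ℝ^m`: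
the union, over the simplices `J` of the nerve, of the convex hulls of the
standard basis vectors `{e_j : j ∈ J}`. -/
def nerveRealization {m : ℕ} {X : Type*} (U : Fin m → Set X) :
    Set (EuclideanSpace ℝ (Fin m)) :=
  ⋃ J ∈ nerve U, convexHull ℝ ((fun j => EuclideanSpace.single j (1 : ℝ)) '' J)

noncomputable section NerveAux
open Finset
open scoped Classical

variable {m : ℕ}

/-- coordinate continuity on EuclideanSpace -/
lemma continuous_coord {m : ℕ} (i : Fin m) :
    Continuous fun t : EuclideanSpace ℝ (Fin m) => t i :=
  (continuous_apply i).comp (EuclideanSpace.equiv (Fin m) ℝ).continuous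

lemma sum_coord {ι : Type*} (s : Finset ι) (f : ι → EuclideanSpace ℝ (Fin m)) (i : Fin m) :
    (∑ j ∈ s, f j) i = ∑ j ∈ s, f j i := by
  classical
  induction s using Finset.induction_on with
  | empty => rfl
  | insert _ _ h ih => rw [Finset.sum_insert h, Finset.sum_insert h, PiLp.add_apply, ih]

def nloT (t : EuclideanSpace ℝ (Fin m)) (J : Finset (Fin m)) : ℝ :=
  Jᶜ.fold max 0 (fun i => t i)

def nhiT (t : EuclideanSpace ℝ (Fin m)) (J : Finset (Fin m)) : ℝ :=
  if h : J.Nonempty then J.inf' h (fun i => t i) else 0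

def nccT (t : EuclideanSpace ℝ (Fin m)) (J : Finset (Fin m)) : ℝ :=
  max (nhiT t J - nloT t J) 0

def npsi (J : Finset (Fin m)) (t : EuclideanSpace ℝ (Fin m)) : ℝ := J.card * nccT t J

def nMx (t : EuclideanSpace ℝ (Fin m)) : ℝ := univ.fold max 0 (fun i => t i)

def nsupp (t : EuclideanSpace ℝ (Fin m)) : Finset (Fin m) :=
  univ.filter (fun i => t i ≠ 0)

lemma nloT_nonneg (t : EuclideanSpace ℝ (Fin m)) (J : Finset (Fin m)) : 0 ≤ nloT t J :=
  (Finset.le_fold_max _).2 (Or.inl le_rfl)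

lemma nccT_nonneg (t : EuclideanSpace ℝ (Fin m)) (J : Finset (Fin m)) : 0 ≤ nccT t J :=
  le_max_right _ _

lemma npsi_nonneg (J : Finset (Fin m)) (t : EuclideanSpace ℝ (Fin m)) : 0 ≤ npsi J t :=
  mul_nonneg (Nat.cast_nonneg _) (nccT_nonneg t J)

lemma le_nMx (t : EuclideanSpace ℝ (Fin m)) (i : Fin m) : t i ≤ nMx t :=
  (Finset.le_fold_max _).2 (Or.inr ⟨i, mem_univ i, le_rfl⟩)

lemma nMx_nonneg (t : EuclideanSpace ℝ (Fin m)) : 0 ≤ nMx t :=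
  (Finset.le_fold_max _).2 (Or.inl le_rfl)

/-- interval attached to J -/
def nE (t : EuclideanSpace ℝ (Fin m)) (J : Finset (Fin m)) : Set ℝ :=
  Set.Ico (nloT t J) (nhiT t J)

lemma nE_superlevel {t : EuclideanSpace ℝ (Fin m)} {J : Finset (Fin m)} {θ : ℝ}
    (h : θ ∈ nE t J) : J = univ.filter (fun l => θ < t l) := by
  obtain ⟨h1, h2⟩ := h
  have hJ : J.Nonempty := by
    by_contra hc
    rw [nhiT, dif_neg hc] at h2
    exact absurd (lt_of_le_of_lt h1 h2) (not_lt.2 (nloT_nonneg t J))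
  rw [nhiT, dif_pos hJ] at h2
  ext l
  simp only [mem_filter, mem_univ, true_and]
  constructor
  · intro hl
    exact lt_of_lt_of_le h2 (Finset.inf'_le _ hl)
  · intro hl
    by_contra hc
    have : t l ≤ nloT t J := (Finset.le_fold_max _).2 (Or.inr ⟨l, by simpa using hc, le_rfl⟩)
    exact absurd (lt_of_le_of_lt (this.trans h1) hl) (lt_irrefl _)

lemma nE_disjoint (t : EuclideanSpace ℝ (Fin m)) :
    Set.PairwiseDisjoint (↑(univ : Finset (Finset (Fin m)))) (nE t) := by
  intro J _ J' _ hne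
  rw [Function.onFun, Set.disjoint_left]
  intro θ h1 h2
  exact hne ((nE_superlevel h1).trans (nE_superlevel h2).symm)

lemma nE_biUnion_mem (t : EuclideanSpace ℝ (Fin m)) (ht : ∀ i, 0 ≤ t i) (i : Fin m) :
    (⋃ J ∈ univ.filter (fun J : Finset (Fin m) => i ∈ J), nE t J) = Set.Ico 0 (t i) := by
  ext θ
  simp only [Set.mem_iUnion, mem_filter, mem_univ, true_and, exists_prop]
  constructor
  · rintro ⟨J, hiJ, h1, h2⟩
    have hJ : J.Nonempty := ⟨i, hiJ⟩
    rw [nhiT, dif_pos hJ] at h2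
    exact ⟨(nloT_nonneg t J).trans h1, lt_of_lt_of_le h2 (Finset.inf'_le _ hiJ)⟩
  · rintro ⟨h0, hθ⟩
    refine ⟨univ.filter (fun l => θ < t l), by simpa using hθ, ?_, ?_⟩
    · rw [nloT, Finset.fold_max_le]
      refine ⟨h0, fun l hl => ?_⟩
      simp only [Finset.mem_compl, mem_filter, mem_univ, true_and, not_lt] at hl
      exact hl
    · rw [nhiT, dif_pos ⟨i, by simpa using hθ⟩]
      refine (Finset.lt_inf'_iff _).2 ?_
      intro l hl
      simpa using hl
  
lemma nE_biUnion_nonempty (t : EuclideanSpace ℝ (Fin m)) (ht : ∀ i, 0 ≤ t i) :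
    (⋃ J ∈ univ.filter (fun J : Finset (Fin m) => J.Nonempty), nE t J) = Set.Ico 0 (nMx t) := by
  ext θ
  simp only [Set.mem_iUnion, mem_filter, mem_univ, true_and, exists_prop]
  constructor
  · rintro ⟨J, hJ, h1, h2⟩
    rw [nhiT, dif_pos hJ] at h2
    obtain ⟨j, hj⟩ := hJ
    exact ⟨(nloT_nonneg t J).trans h1,
      lt_of_lt_of_le h2 ((Finset.inf'_le _ hj).trans (le_nMx t j))⟩
  · rintro ⟨h0, hθ⟩
    have hex : ∃ l, θ < t l := by
      by_contra hc
      push_neg at hc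
      have : nMx t ≤ θ := (Finset.fold_max_le _).2 ⟨h0, fun l _ => hc l⟩
      exact absurd (lt_of_le_of_lt this hθ) (lt_irrefl _)
    obtain ⟨l, hl⟩ := hex
    refine ⟨univ.filter (fun l => θ < t l), ⟨l, by simpa using hl⟩, ?_, ?_⟩
    · rw [nloT, Finset.fold_max_le]
      refine ⟨h0, fun l' hl' => ?_⟩
      simp only [Finset.mem_compl, mem_filter, mem_univ, true_and, not_lt] at hl'
      exact hl'
    · rw [nhiT, dif_pos ⟨l, by simpa using hl⟩]
      refine (Finset.lt_inf'_iff _).2 ?_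
      intro l' hl'
      simpa using hl'

open MeasureTheory in
lemma sum_nccT_eq {s : Finset (Finset (Fin m))} {t : EuclideanSpace ℝ (Fin m)} {B : ℝ}
    (hB : 0 ≤ B) (hU : (⋃ J ∈ s, nE t J) = Set.Ico 0 B) :
    ∑ J ∈ s, nccT t J = B := by
  have hmeas : volume (⋃ J ∈ s, nE t J) = ∑ J ∈ s, volume (nE t J) :=
    measure_biUnion_finset ((nE_disjoint t).subset (by simp [Set.subset_def]))
      (fun J _ => measurableSet_Ico)
  rw [hU, Real.volume_Ico, sub_zero] at hmeas
  have hfin : ∀ J ∈ s, volume (nE t J) ≠ ⊤ := fun J _ => by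
    rw [nE, Real.volume_Ico]; exact ENNReal.ofReal_ne_top
  have := congrArg ENNReal.toReal hmeas
  rw [ENNReal.toReal_ofReal hB, ENNReal.toReal_sum hfin] at this
  rw [this]
  refine Finset.sum_congr rfl fun J _ => ?_
  rw [nE, Real.volume_Ico, nccT]
  rcases le_total (nhiT t J - nloT t J) 0 with h | h
  · rw [max_eq_right h, ENNReal.ofReal_eq_zero.2 h, ENNReal.toReal_zero]
  · rw [max_eq_left h, ENNReal.toReal_ofReal h]

lemma sum_nccT_mem (t : EuclideanSpace ℝ (Fin m)) (ht : ∀ i, 0 ≤ t i) (i : Fin m) :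
    ∑ J ∈ univ.filter (fun J : Finset (Fin m) => i ∈ J), nccT t J = t i :=
  sum_nccT_eq (ht i) (nE_biUnion_mem t ht i)

lemma sum_nccT_nonempty (t : EuclideanSpace ℝ (Fin m)) (ht : ∀ i, 0 ≤ t i) :
    ∑ J ∈ univ.filter (fun J : Finset (Fin m) => J.Nonempty), nccT t J = nMx t :=
  sum_nccT_eq (nMx_nonneg t) (nE_biUnion_nonempty t ht)

lemma sum_npsi_eq (t : EuclideanSpace ℝ (Fin m)) (ht : ∀ i, 0 ≤ t i) :
    ∑ J : Finset (Fin m), npsi J t = ∑ i, t i := by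
  have h1 : ∀ J : Finset (Fin m), npsi J t = ∑ i, (if i ∈ J then nccT t J else 0) := by
    intro J
    rw [Finset.sum_ite_mem, Finset.univ_inter, Finset.sum_const, nsmul_eq_mul, npsi]
  calc ∑ J : Finset (Fin m), npsi J t
      = ∑ J : Finset (Fin m), ∑ i, (if i ∈ J then nccT t J else 0) := by
        exact Finset.sum_congr rfl fun J _ => h1 J
    _ = ∑ i, ∑ J : Finset (Fin m), (if i ∈ J then nccT t J else 0) := Finset.sum_comm
    _ = ∑ i, t i := by
        refine Finset.sum_congr rfl fun i _ => ?_
        rw [← Finset.sum_filter, sum_nccT_mem t ht i]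

lemma sum_nccT_notmem (t : EuclideanSpace ℝ (Fin m)) (ht : ∀ i, 0 ≤ t i) (i : Fin m) :
    ∑ J ∈ univ.filter (fun J : Finset (Fin m) => J.Nonempty ∧ i ∉ J), nccT t J
      = nMx t - t i := by
  have hsplit :
      ∑ J ∈ (univ.filter (fun J : Finset (Fin m) => J.Nonempty)).filter (fun J => i ∈ J),
          nccT t J
        + ∑ J ∈ (univ.filter (fun J : Finset (Fin m) => J.Nonempty)).filter (fun J => i ∉ J),
          nccT t J
      = nMx t := by
    rw [Finset.sum_filter_add_sum_filter_not, sum_nccT_nonempty t ht]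
  have h1 : (univ.filter (fun J : Finset (Fin m) => J.Nonempty)).filter (fun J => i ∈ J)
      = univ.filter (fun J : Finset (Fin m) => i ∈ J) := by
    rw [Finset.filter_filter]
    exact Finset.filter_congr fun J _ => by
      constructor
      · rintro ⟨_, h⟩; exact h
      · intro h; exact ⟨⟨i, h⟩, h⟩
  have h2 : (univ.filter (fun J : Finset (Fin m) => J.Nonempty)).filter (fun J => i ∉ J)
      = univ.filter (fun J : Finset (Fin m) => J.Nonempty ∧ i ∉ J) := by
    rw [Finset.filter_filter]
  rw [h1, h2, sum_nccT_mem t ht i] at hsplit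
  linarith

lemma mem_hull_iff (J : Finset (Fin m)) (t : EuclideanSpace ℝ (Fin m)) :
    t ∈ convexHull ℝ ((fun j => EuclideanSpace.single j (1 : ℝ)) '' ↑J) ↔
      (∀ i, 0 ≤ t i) ∧ ∑ i, t i = 1 ∧ ∀ i ∉ J, t i = 0 := by
  constructor
  · intro ht
    have hconv : Convex ℝ {u : EuclideanSpace ℝ (Fin m) |
        (∀ i, 0 ≤ u i) ∧ ∑ i, u i = 1 ∧ ∀ i ∉ J, u i = 0} := by
      rintro x ⟨hx0, hx1, hx2⟩ y ⟨hy0, hy1, hy2⟩ a b ha hb hab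
      refine ⟨fun i => ?_, ?_, fun i hi => ?_⟩
      · rw [PiLp.add_apply, PiLp.smul_apply, PiLp.smul_apply, smul_eq_mul, smul_eq_mul]
        exact add_nonneg (mul_nonneg ha (hx0 i)) (mul_nonneg hb (hy0 i))
      · simp only [PiLp.add_apply, PiLp.smul_apply, smul_eq_mul]
        rw [Finset.sum_add_distrib, ← Finset.mul_sum, ← Finset.mul_sum, hx1, hy1]
        linarith
      · simp only [PiLp.add_apply, PiLp.smul_apply, smul_eq_mul, hx2 i hi, hy2 i hi]
        ring
    refine convexHull_min ?_ hconv ht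
    rintro u ⟨j, hj, rfl⟩
    dsimp only
    refine ⟨fun i => ?_, ?_, fun i hi => ?_⟩
    · rw [EuclideanSpace.single_apply]
      split <;> norm_num
    · simp [EuclideanSpace.single_apply]
    · rw [EuclideanSpace.single_apply]
      simp only [Finset.mem_coe] at hj
      have : i ≠ j := fun h => hi (h ▸ hj)
      simp [this]
  · rintro ⟨h0, h1, h2⟩
    have hsum : ∑ j ∈ J, t j = 1 := by
      rw [← h1]
      exact Finset.sum_subset (Finset.subset_univ J) (fun i _ hi => h2 i hi)
    have heq : t = ∑ j ∈ J, t j • EuclideanSpace.single j (1 : ℝ) := by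
      ext i
      rw [sum_coord]
      rcases Classical.em (i ∈ J) with hi | hi
      · rw [Finset.sum_eq_single i
          (fun j _ hj => by
            rw [PiLp.smul_apply, EuclideanSpace.single_apply, if_neg (by exact fun h => hj h.symm)]
            simp)
          (fun h => absurd hi h)]
        rw [PiLp.smul_apply, EuclideanSpace.single_apply, if_pos rfl]
        simp
      · rw [h2 i hi, Finset.sum_eq_zero]
        intro j hj
        rw [PiLp.smul_apply, EuclideanSpace.single_apply,
          if_neg (fun h => hi (by rw [h]; exact hj))]
        simp
    rw [heq]
    have := Finset.centerMass_mem_convexHull (t := J)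
      (w := fun j => t j) (z := fun j => EuclideanSpace.single j (1 : ℝ))
      (fun i hi => h0 i) (by rw [hsum]; norm_num)
      (fun i hi => Set.mem_image_of_mem (fun j => EuclideanSpace.single j (1 : ℝ)) (Finset.mem_coe.2 hi))
    rwa [Finset.centerMass_eq_of_sum_1 _ _ hsum] at this

lemma nerve_downward {X : Type*} {U : Fin m → Set X} {J J' : Finset (Fin m)}
    (hJ : J ∈ nerve U) (hne : J'.Nonempty) (hsub : J' ⊆ J) : J' ∈ nerve U := by
  refine ⟨hne, ?_⟩
  obtain ⟨x, hx⟩ := hJ.2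
  simp only [Set.mem_iInter] at hx
  exact ⟨x, by simp only [Set.mem_iInter]; exact fun j hj => hx j (hsub hj)⟩

lemma mem_real_iff {N : ℕ} (U : Fin m → Set (EuclideanSpace ℝ (Fin N)))
    (t : EuclideanSpace ℝ (Fin m)) :
    t ∈ nerveRealization U ↔
      (∀ i, 0 ≤ t i) ∧ ∑ i, t i = 1 ∧ nsupp t ∈ nerve U := by
  constructor
  · intro ht
    rw [nerveRealization, Set.mem_iUnion₂] at ht
    obtain ⟨J, hJ, htJ⟩ := ht
    obtain ⟨h0, h1, h2⟩ := (mem_hull_iff J t).1 htJ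
    refine ⟨h0, h1, ?_⟩
    have hsub : nsupp t ⊆ J := fun i hi => by
      simp only [nsupp, mem_filter, mem_univ, true_and] at hi
      by_contra hc
      exact hi (h2 i hc)
    have hne : (nsupp t).Nonempty := by
      by_contra hc
      rw [Finset.not_nonempty_iff_eq_empty] at hc
      have : ∀ i, t i = 0 := fun i => by
        by_contra h
        have : i ∈ nsupp t := by simp [nsupp, h]
        rw [hc] at this
        exact absurd this (Finset.notMem_empty i)
      rw [Finset.sum_eq_zero (fun i _ => this i)] at h1
      norm_num at h1
    exact nerve_downward hJ hne hsub
  · rintro ⟨h0, h1, h2⟩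
    rw [nerveRealization, Set.mem_iUnion₂]
    refine ⟨nsupp t, h2, (mem_hull_iff _ t).2 ⟨h0, h1, fun i hi => ?_⟩⟩
    by_contra hc
    exact hi (by simp [nsupp, hc])

variable {N : ℕ}

def npt (U : Fin m → Set (EuclideanSpace ℝ (Fin N))) (J : Finset (Fin m)) :
    EuclideanSpace ℝ (Fin N) :=
  if h : (⋂ j ∈ J, U j).Nonempty then h.some else 0

lemma npt_mem {U : Fin m → Set (EuclideanSpace ℝ (Fin N))} {J : Finset (Fin m)}
    (hJ : J ∈ nerve U) : npt U J ∈ ⋂ j ∈ J, U j := by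
  rw [npt, dif_pos hJ.2]
  exact hJ.2.some_mem

lemma npt_mem' {U : Fin m → Set (EuclideanSpace ℝ (Fin N))} {J : Finset (Fin m)}
    (hJ : J ∈ nerve U) {j : Fin m} (hj : j ∈ J) : npt U J ∈ U j := by
  have := npt_mem hJ
  simp only [Set.mem_iInter] at this
  exact this j hj

def nrad (U : Fin m → Set (EuclideanSpace ℝ (Fin N))) (J : Finset (Fin m)) (j : Fin m) : ℝ :=
  if h : ∃ e : ℝ, 0 < e ∧ Metric.ball (npt U J) e ⊆ U j then h.choose else 1

lemma nrad_pos (U : Fin m → Set (EuclideanSpace ℝ (Fin N))) (J : Finset (Fin m)) (j : Fin m) :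
    0 < nrad U J j := by
  rw [nrad]
  split
  · next h => exact h.choose_spec.1
  · exact one_pos

lemma ball_nrad_subset {U : Fin m → Set (EuclideanSpace ℝ (Fin N))}
    (hopen : ∀ i, IsOpen (U i)) {J : Finset (Fin m)} {j : Fin m}
    (hJ : J ∈ nerve U) (hj : j ∈ J) :
    Metric.ball (npt U J) (nrad U J j) ⊆ U j := by
  have hex : ∃ e : ℝ, 0 < e ∧ Metric.ball (npt U J) e ⊆ U j :=
    Metric.isOpen_iff.1 (hopen j) _ (npt_mem' hJ hj)
  rw [nrad, dif_pos hex]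
  exact hex.choose_spec.2

def neps (U : Fin m → Set (EuclideanSpace ℝ (Fin N))) : ℝ :=
  ((univ : Finset (Finset (Fin m))) ×ˢ (univ : Finset (Fin m))).fold min 1
    (fun Jj => nrad U Jj.1 Jj.2)

lemma neps_pos (U : Fin m → Set (EuclideanSpace ℝ (Fin N))) : 0 < neps U :=
  (Finset.lt_fold_min _).2 ⟨one_pos, fun x _ => nrad_pos U x.1 x.2⟩

lemma neps_le (U : Fin m → Set (EuclideanSpace ℝ (Fin N))) (J : Finset (Fin m)) (j : Fin m) :
    neps U ≤ nrad U J j :=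
  (Finset.fold_min_le _).2 (Or.inr ⟨(J, j), by simp [Finset.mem_product], le_rfl⟩)

def nR (U : Fin m → Set (EuclideanSpace ℝ (Fin N))) : ℝ :=
  (univ : Finset (Finset (Fin m))).fold max 1 (fun J => ‖npt U J‖)

lemma one_le_nR (U : Fin m → Set (EuclideanSpace ℝ (Fin N))) : 1 ≤ nR U :=
  (Finset.le_fold_max _).2 (Or.inl le_rfl)

lemma norm_npt_le (U : Fin m → Set (EuclideanSpace ℝ (Fin N))) (J : Finset (Fin m)) :
    ‖npt U J‖ ≤ nR U :=
  (Finset.le_fold_max _).2 (Or.inr ⟨J, mem_univ J, le_rfl⟩)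

def ndel (U : Fin m → Set (EuclideanSpace ℝ (Fin N))) : ℝ :=
  min (neps U / (2 * nR U * (m : ℝ) + 1)) (1 / (2 * ((m : ℝ) + 1)))

lemma ndel_pos (U : Fin m → Set (EuclideanSpace ℝ (Fin N))) : 0 < ndel U := by
  have h1 : (0:ℝ) < 2 * nR U * (m : ℝ) + 1 := by
    have := one_le_nR U
    have : (0:ℝ) ≤ 2 * nR U * (m : ℝ) := by positivity
    linarith
  refine lt_min (div_pos (neps_pos U) h1) ?_
  positivity

def nG (U : Fin m → Set (EuclideanSpace ℝ (Fin N))) (t : EuclideanSpace ℝ (Fin m)) :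
    EuclideanSpace ℝ (Fin N) :=
  ∑ J : Finset (Fin m), npsi J t • npt U J

lemma npsi_ne_zero_imp {t : EuclideanSpace ℝ (Fin m)} {J : Finset (Fin m)}
    (hψ : npsi J t ≠ 0) : J.Nonempty ∧ ∀ j ∈ J, 0 < t j := by
  rw [npsi] at hψ
  have hcard : J.card ≠ 0 := by
    intro h; rw [h] at hψ; simp at hψ
  have hcc : nccT t J ≠ 0 := by
    intro h; rw [h] at hψ; simp at hψ
  have hJ : J.Nonempty := Finset.card_ne_zero.1 hcard
  refine ⟨hJ, fun j hj => ?_⟩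
  have hpos : nloT t J < nhiT t J := by
    by_contra hc
    push_neg at hc
    exact hcc (by rw [nccT, max_eq_right (by linarith)])
  have := (nloT_nonneg t J).trans_lt hpos
  rw [nhiT, dif_pos hJ] at hpos this
  exact lt_of_lt_of_le this (Finset.inf'_le _ hj)

set_option maxHeartbeats 1600000 in
lemma nG_mem_star {U : Fin m → Set (EuclideanSpace ℝ (Fin N))}
    (hconv : ∀ i, Convex ℝ (U i)) (hopen : ∀ i, IsOpen (U i))
    {t : EuclideanSpace ℝ (Fin m)} (h0 : ∀ i, 0 ≤ t i) (h1 : ∑ i, t i = 1)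
    (hsupp : nsupp t ∈ nerve U) {i : Fin m} (hi : nMx t - ndel U < t i) :
    nG U t ∈ U i := by
  classical
  set T : Finset (Finset (Fin m)) :=
    univ.filter (fun J => npsi J t ≠ 0) with hT
  have hTnerve : ∀ J ∈ T, J ∈ nerve U := by
    intro J hJ
    rw [hT, mem_filter] at hJ
    obtain ⟨hne, hpos⟩ := npsi_ne_zero_imp hJ.2
    exact nerve_downward hsupp hne
      (fun j hj => by simp [nsupp, ne_of_gt (hpos j hj)])
  have hGsum : nG U t = ∑ J ∈ T, npsi J t • npt U J := by
    rw [nG]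
    refine (Finset.sum_subset (Finset.filter_subset _ _) ?_).symm
    intro J _ hJ
    have : npsi J t = 0 := by
      by_contra hc
      exact hJ (mem_filter.2 ⟨mem_univ J, hc⟩)
    rw [this, zero_smul]
  have hmass : ∑ J ∈ T, npsi J t = 1 := by
    rw [hT, Finset.sum_filter_ne_zero, sum_npsi_eq t h0, h1]
  set T1 : Finset (Finset (Fin m)) := T.filter (fun J => i ∈ J) with hT1
  set T2 : Finset (Finset (Fin m)) := T.filter (fun J => i ∉ J) with hT2
  set w : ℝ := ∑ J ∈ T2, npsi J t with hw
  have hw0 : 0 ≤ w := Finset.sum_nonneg fun J _ => npsi_nonneg J t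
  have hsplit : ∑ J ∈ T1, npsi J t + w = 1 := by
    have := Finset.sum_filter_add_sum_filter_not T (fun J => i ∈ J) (fun J => npsi J t)
    rw [hmass] at this
    exact this
  have hMxti : 0 ≤ nMx t - t i := by linarith [le_nMx t i]
  have hMxti2 : nMx t - t i < ndel U := by linarith
  -- bound on w
  have hwle : w ≤ (m : ℝ) * (nMx t - t i) := by
    have step1 : w ≤ ∑ J ∈ T2, (m : ℝ) * nccT t J := by
      refine Finset.sum_le_sum fun J _ => ?_
      rw [npsi]
      refine mul_le_mul_of_nonneg_right ?_ (nccT_nonneg t J)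
      exact_mod_cast Finset.card_le_card (Finset.subset_univ J) |>.trans
        (le_of_eq (Finset.card_fin m))
    have step2 : ∑ J ∈ T2, nccT t J
        ≤ ∑ J ∈ univ.filter (fun J : Finset (Fin m) => J.Nonempty ∧ i ∉ J), nccT t J := by
      refine Finset.sum_le_sum_of_subset_of_nonneg ?_ (fun J _ _ => nccT_nonneg t J)
      intro J hJ
      rw [hT2, mem_filter, hT, mem_filter] at hJ
      rw [mem_filter]
      exact ⟨mem_univ J, (npsi_ne_zero_imp hJ.1.2).1, hJ.2⟩
    rw [sum_nccT_notmem t h0 i] at step2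
    calc w ≤ ∑ J ∈ T2, (m : ℝ) * nccT t J := step1
      _ = (m : ℝ) * ∑ J ∈ T2, nccT t J := by rw [Finset.mul_sum]
      _ ≤ (m : ℝ) * (nMx t - t i) := by
          refine mul_le_mul_of_nonneg_left step2 (Nat.cast_nonneg m)
  have hm1 : (1 : ℝ) ≤ (m : ℝ) := by exact_mod_cast i.pos
  have hndel2 : ndel U ≤ 1 / (2 * ((m : ℝ) + 1)) := min_le_right _ _
  have hwhalf : w ≤ 1 / 2 := by
    have : w ≤ (m : ℝ) * ndel U := by
      calc w ≤ (m : ℝ) * (nMx t - t i) := hwle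
        _ ≤ (m : ℝ) * ndel U := by
            exact mul_le_mul_of_nonneg_left (le_of_lt hMxti2) (Nat.cast_nonneg m)
    have h2 : (m : ℝ) * ndel U ≤ (m : ℝ) * (1 / (2 * ((m : ℝ) + 1))) :=
      mul_le_mul_of_nonneg_left hndel2 (Nat.cast_nonneg m)
    have h3 : (m : ℝ) * (1 / (2 * ((m : ℝ) + 1))) ≤ 1 / 2 := by
      rw [mul_one_div, div_le_div_iff₀ (by positivity) (by norm_num : (0:ℝ) < 2)]
      nlinarith
    linarith
  have h1w : (0 : ℝ) < 1 - w := by linarith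
  set A : EuclideanSpace ℝ (Fin N) := ∑ J ∈ T1, npsi J t • npt U J with hA
  set B : EuclideanSpace ℝ (Fin N) := ∑ J ∈ T2, npsi J t • npt U J with hB
  have hGAB : nG U t = A + B := by
    rw [hGsum, hA, hB, hT1, hT2, Finset.sum_filter_add_sum_filter_not]
  set b : EuclideanSpace ℝ (Fin N) := (1 - w)⁻¹ • A with hb
  have hT1mass : ∑ J ∈ T1, npsi J t = 1 - w := by linarith
  -- b plus a small vector is in U i
  have hball : ∀ v : EuclideanSpace ℝ (Fin N), ‖v‖ < neps U → b + v ∈ U i := by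
    intro v hv
    have hlam : ∑ J ∈ T1, (1 - w)⁻¹ * npsi J t = 1 := by
      rw [← Finset.mul_sum, hT1mass, inv_mul_cancel₀ (ne_of_gt h1w)]
    have hmem : ∀ J ∈ T1, npt U J + v ∈ U i := by
      intro J hJ
      rw [hT1, mem_filter] at hJ
      refine ball_nrad_subset hopen (hTnerve J hJ.1) hJ.2 ?_
      rw [Metric.mem_ball]
      calc dist (npt U J + v) (npt U J) = ‖v‖ := by
            rw [dist_eq_norm]; simp
        _ < neps U := hv
        _ ≤ nrad U J i := neps_le U J i
    have hsm := (hconv i).sum_mem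
      (fun J (_ : J ∈ T1) => mul_nonneg (le_of_lt (inv_pos.2 h1w)) (npsi_nonneg J t))
      hlam hmem
    have heq : ∑ J ∈ T1, ((1 - w)⁻¹ * npsi J t) • (npt U J + v) = b + v := by
      have : ∀ J ∈ T1, ((1 - w)⁻¹ * npsi J t) • (npt U J + v)
          = (1 - w)⁻¹ • (npsi J t • npt U J) + ((1 - w)⁻¹ * npsi J t) • v := by
        intro J _
        rw [smul_add, mul_smul]
      rw [Finset.sum_congr rfl this, Finset.sum_add_distrib, ← Finset.smul_sum, ← hA,
        ← Finset.sum_smul, hlam, one_smul, hb]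
    rwa [heq] at hsm
  -- the distance bound
  have hnormA : ‖A‖ ≤ (1 - w) * nR U := by
    calc ‖A‖ ≤ ∑ J ∈ T1, ‖npsi J t • npt U J‖ := norm_sum_le _ _
      _ ≤ ∑ J ∈ T1, npsi J t * nR U := by
          refine Finset.sum_le_sum fun J _ => ?_
          rw [norm_smul, Real.norm_eq_abs, abs_of_nonneg (npsi_nonneg J t)]
          exact mul_le_mul_of_nonneg_left (norm_npt_le U J) (npsi_nonneg J t)
      _ = (1 - w) * nR U := by rw [← Finset.sum_mul, hT1mass]
  have hnormB : ‖B‖ ≤ w * nR U := by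
    calc ‖B‖ ≤ ∑ J ∈ T2, ‖npsi J t • npt U J‖ := norm_sum_le _ _
      _ ≤ ∑ J ∈ T2, npsi J t * nR U := by
          refine Finset.sum_le_sum fun J _ => ?_
          rw [norm_smul, Real.norm_eq_abs, abs_of_nonneg (npsi_nonneg J t)]
          exact mul_le_mul_of_nonneg_left (norm_npt_le U J) (npsi_nonneg J t)
      _ = w * nR U := by rw [← Finset.sum_mul]
  have hdiff : nG U t - b = B + (1 - (1 - w)⁻¹) • A := by
    rw [hGAB, hb]
    rw [sub_smul, one_smul]
    abel
  have hinvw : (1 - w)⁻¹ - 1 = w / (1 - w) := by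
    field_simp
    ring
  have hnorm : ‖nG U t - b‖ ≤ 2 * nR U * w := by
    have hle1 : ‖nG U t - b‖ ≤ ‖B‖ + ‖(1 - (1 - w)⁻¹) • A‖ := by
      rw [hdiff]; exact norm_add_le _ _
    have habs : |1 - (1 - w)⁻¹| = w / (1 - w) := by
      rw [abs_of_nonpos, neg_sub, hinvw]
      have : (1:ℝ) ≤ (1 - w)⁻¹ := by
        rw [le_inv_comm₀ one_pos h1w]; linarith
      linarith
    have hle2 : ‖(1 - (1 - w)⁻¹) • A‖ ≤ w / (1 - w) * ((1 - w) * nR U) := by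
      rw [norm_smul, Real.norm_eq_abs, habs]
      exact mul_le_mul_of_nonneg_left hnormA (div_nonneg hw0 h1w.le)
    have heq2 : w / (1 - w) * ((1 - w) * nR U) = w * nR U := by
      field_simp
    have hBle : ‖B‖ ≤ w * nR U := hnormB
    calc ‖nG U t - b‖ ≤ ‖B‖ + ‖(1 - (1 - w)⁻¹) • A‖ := hle1
      _ ≤ w * nR U + w / (1 - w) * ((1 - w) * nR U) := add_le_add hBle hle2
      _ = 2 * nR U * w := by rw [heq2]; ring
  have hm0 : (0:ℝ) < (m : ℝ) := by linarith
  have hRpos : (0:ℝ) < nR U := lt_of_lt_of_le one_pos (one_le_nR U)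
  have hfinal : 2 * nR U * w < neps U := by
    have hcpos : (0:ℝ) < 2 * nR U * (m : ℝ) := by positivity
    have s1 : 2 * nR U * w ≤ 2 * nR U * ((m : ℝ) * (nMx t - t i)) :=
      mul_le_mul_of_nonneg_left hwle (by positivity)
    have s2 : 2 * nR U * ((m : ℝ) * (nMx t - t i)) < 2 * nR U * ((m : ℝ) * ndel U) := by
      have := mul_lt_mul_of_pos_left hMxti2 hm0
      exact mul_lt_mul_of_pos_left this (by positivity)
    have s3 : 2 * nR U * ((m : ℝ) * ndel U)
        ≤ 2 * nR U * (m : ℝ) * (neps U / (2 * nR U * (m : ℝ) + 1)) := by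
      have hd : ndel U ≤ neps U / (2 * nR U * (m : ℝ) + 1) := min_le_left _ _
      calc 2 * nR U * ((m : ℝ) * ndel U) = 2 * nR U * (m : ℝ) * ndel U := by ring
        _ ≤ 2 * nR U * (m : ℝ) * (neps U / (2 * nR U * (m : ℝ) + 1)) :=
            mul_le_mul_of_nonneg_left hd (by positivity)
    have s4 : 2 * nR U * (m : ℝ) * (neps U / (2 * nR U * (m : ℝ) + 1)) < neps U := by
      rw [mul_div_assoc']
      rw [div_lt_iff₀ (by linarith)]
      nlinarith [neps_pos U]
    linarith
  have hmem := hball (nG U t - b) (lt_of_le_of_lt hnorm hfinal)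
  have heqq : b + (nG U t - b) = nG U t := by abel
  rwa [heqq] at hmem

section Continuity

variable {α : Type*} [TopologicalSpace α]

lemma continuous_fold_max {ι : Type*} (s : Finset ι) (b : ℝ)
    (g : ι → α → ℝ) (hg : ∀ i, Continuous (g i)) :
    Continuous fun x => s.fold max b (fun i => g i x) := by
  classical
  induction s using Finset.induction_on with
  | empty => simpa using continuous_const
  | insert _ _ h ih =>
      simp only [Finset.fold_insert h]
      exact (hg _).max ih

lemma continuous_inf' {ι : Type*} {s : Finset ι} (hs : s.Nonempty)
    (g : ι → α → ℝ) (hg : ∀ i, Continuous (g i)) :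
    Continuous fun x => s.inf' hs (fun i => g i x) := by
  classical
  induction s using Finset.cons_induction with
  | empty => exact absurd hs (by simp)
  | cons a s ha ih =>
      rcases s.eq_empty_or_nonempty with rfl | hne
      · simp only [Finset.cons_empty]
        simpa using hg a
      · have heq : ∀ x, (Finset.cons a s ha).inf' hs (fun i => g i x)
            = min (g a x) (s.inf' hne (fun i => g i x)) := by
          intro x
          exact Finset.inf'_cons hne (fun i => g i x)
        simp only [heq]
        exact (hg a).min (ih hne)

end Continuity

lemma continuous_nloT (J : Finset (Fin m)) :
    Continuous fun t : EuclideanSpace ℝ (Fin m) => nloT t J :=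
  continuous_fold_max _ _ _ (fun i => continuous_coord i)

lemma continuous_nMx : Continuous fun t : EuclideanSpace ℝ (Fin m) => nMx t :=
  continuous_fold_max _ _ _ (fun i => continuous_coord i)

lemma continuous_nhiT (J : Finset (Fin m)) :
    Continuous fun t : EuclideanSpace ℝ (Fin m) => nhiT t J := by
  rcases Classical.em J.Nonempty with h | h
  · simp only [nhiT, dif_pos h]
    exact continuous_inf' h _ (fun i => continuous_coord i)
  · simp only [nhiT, dif_neg h]
    exact continuous_const

lemma continuous_npsi (J : Finset (Fin m)) :
    Continuous fun t : EuclideanSpace ℝ (Fin m) => npsi J t := by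
  refine continuous_const.mul ?_
  exact ((continuous_nhiT J).sub (continuous_nloT J)).max continuous_const

lemma continuous_nG (U : Fin m → Set (EuclideanSpace ℝ (Fin N))) :
    Continuous fun t : EuclideanSpace ℝ (Fin m) => nG U t := by
  refine continuous_finset_sum _ fun J _ => ?_
  exact (continuous_npsi J).smul continuous_const

/-! ### The partition of unity map -/

def ndd (U : Fin m → Set (EuclideanSpace ℝ (Fin N))) (i : Fin m)
    (x : EuclideanSpace ℝ (Fin N)) : ℝ :=
  if ((U i)ᶜ : Set (EuclideanSpace ℝ (Fin N))).Nonempty then Metric.infDist x (U i)ᶜ else 1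

lemma ndd_nonneg (U : Fin m → Set (EuclideanSpace ℝ (Fin N))) (i : Fin m)
    (x : EuclideanSpace ℝ (Fin N)) : 0 ≤ ndd U i x := by
  rw [ndd]; split
  · exact Metric.infDist_nonneg
  · exact zero_le_one

lemma ndd_pos_of_mem {U : Fin m → Set (EuclideanSpace ℝ (Fin N))}
    (hopen : ∀ i, IsOpen (U i)) {i : Fin m} {x : EuclideanSpace ℝ (Fin N)}
    (hx : x ∈ U i) : 0 < ndd U i x := by
  rw [ndd]; split
  · next h =>
      exact ((hopen i).isClosed_compl.notMem_iff_infDist_pos h).1 (fun hc => hc hx)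
  · exact one_pos

lemma ndd_eq_zero_of_not_mem {U : Fin m → Set (EuclideanSpace ℝ (Fin N))}
    {i : Fin m} {x : EuclideanSpace ℝ (Fin N)} (hx : x ∉ U i) : ndd U i x = 0 := by
  rw [ndd, if_pos ⟨x, hx⟩]
  exact Metric.infDist_zero_of_mem hx

lemma mem_of_ndd_ne_zero {U : Fin m → Set (EuclideanSpace ℝ (Fin N))}
    {i : Fin m} {x : EuclideanSpace ℝ (Fin N)} (hx : ndd U i x ≠ 0) : x ∈ U i := by
  by_contra hc
  exact hx (ndd_eq_zero_of_not_mem hc)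

lemma continuous_ndd (U : Fin m → Set (EuclideanSpace ℝ (Fin N))) (i : Fin m) :
    Continuous fun x => ndd U i x := by
  by_cases h : ((U i)ᶜ : Set (EuclideanSpace ℝ (Fin N))).Nonempty
  · simpa only [ndd, if_pos h] using Metric.continuous_infDist_pt ((U i)ᶜ)
  · simpa only [ndd, if_neg h] using continuous_const (y := (1:ℝ))

def nS (U : Fin m → Set (EuclideanSpace ℝ (Fin N))) (x : EuclideanSpace ℝ (Fin N)) : ℝ :=
  ∑ i, ndd U i x

lemma continuous_nS (U : Fin m → Set (EuclideanSpace ℝ (Fin N))) :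
    Continuous fun x => nS U x :=
  continuous_finset_sum _ fun i _ => continuous_ndd U i

lemma nS_pos {U : Fin m → Set (EuclideanSpace ℝ (Fin N))}
    (hopen : ∀ i, IsOpen (U i)) {x : EuclideanSpace ℝ (Fin N)}
    (hx : x ∈ ⋃ i, U i) : 0 < nS U x := by
  obtain ⟨i, hi⟩ := Set.mem_iUnion.1 hx
  exact Finset.sum_pos' (fun j _ => ndd_nonneg U j x)
    ⟨i, mem_univ i, ndd_pos_of_mem hopen hi⟩

def nF (U : Fin m → Set (EuclideanSpace ℝ (Fin N))) (x : EuclideanSpace ℝ (Fin N)) :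
    EuclideanSpace ℝ (Fin m) :=
  (EuclideanSpace.equiv (Fin m) ℝ).symm (fun i => ndd U i x / nS U x)

lemma nF_apply (U : Fin m → Set (EuclideanSpace ℝ (Fin N))) (x : EuclideanSpace ℝ (Fin N))
    (i : Fin m) : nF U x i = ndd U i x / nS U x := rfl

lemma nF_nonneg (U : Fin m → Set (EuclideanSpace ℝ (Fin N))) (x : EuclideanSpace ℝ (Fin N))
    (i : Fin m) : 0 ≤ nF U x i :=
  div_nonneg (ndd_nonneg U i x) ((Finset.sum_nonneg fun j _ => ndd_nonneg U j x))

lemma nF_sum {U : Fin m → Set (EuclideanSpace ℝ (Fin N))} (hopen : ∀ i, IsOpen (U i))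
    {x : EuclideanSpace ℝ (Fin N)} (hx : x ∈ ⋃ i, U i) : ∑ i, nF U x i = 1 := by
  simp only [nF_apply]
  rw [← Finset.sum_div]
  have hS : ∑ i, ndd U i x = nS U x := rfl
  rw [hS, div_self (ne_of_gt (nS_pos hopen hx))]

lemma mem_of_nF_ne_zero {U : Fin m → Set (EuclideanSpace ℝ (Fin N))}
    {x : EuclideanSpace ℝ (Fin N)} {i : Fin m} (h : nF U x i ≠ 0) : x ∈ U i := by
  rw [nF_apply] at h
  refine mem_of_ndd_ne_zero (fun hc => h ?_)
  rw [hc, zero_div]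

/-- generic membership criterion for the nerve realization -/
lemma mem_real_of_witness {U : Fin m → Set (EuclideanSpace ℝ (Fin N))}
    {u : EuclideanSpace ℝ (Fin m)} (h0 : ∀ i, 0 ≤ u i) (h1 : ∑ i, u i = 1)
    (x₀ : EuclideanSpace ℝ (Fin N)) (hx₀ : ∀ j, u j ≠ 0 → x₀ ∈ U j) :
    u ∈ nerveRealization U := by
  rw [mem_real_iff]
  refine ⟨h0, h1, ?_, ⟨x₀, ?_⟩⟩
  · by_contra hc
    rw [Finset.not_nonempty_iff_eq_empty] at hc
    have hz : ∀ i, u i = 0 := by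
      intro i
      by_contra h
      have : i ∈ nsupp u := by simp [nsupp, h]
      rw [hc] at this
      exact absurd this (Finset.notMem_empty i)
    rw [Finset.sum_eq_zero (fun i _ => hz i)] at h1
    norm_num at h1
  · simp only [Set.mem_iInter]
    intro j hj
    rw [nsupp, mem_filter] at hj
    exact hx₀ j hj.2

lemma nF_mem_real {U : Fin m → Set (EuclideanSpace ℝ (Fin N))}
    (hopen : ∀ i, IsOpen (U i)) {x : EuclideanSpace ℝ (Fin N)} (hx : x ∈ ⋃ i, U i) :
    nF U x ∈ nerveRealization U :=
  mem_real_of_witness (nF_nonneg U x) (nF_sum hopen hx) x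
    (fun j hj => mem_of_nF_ne_zero hj)

lemma exists_argmax {t : EuclideanSpace ℝ (Fin m)} (h0 : ∀ i, 0 ≤ t i)
    (h1 : ∑ i, t i = 1) : ∃ i, t i = nMx t := by
  have hne : (univ : Finset (Fin m)).Nonempty := by
    by_contra hc
    rw [Finset.not_nonempty_iff_eq_empty] at hc
    rw [hc, Finset.sum_empty] at h1
    norm_num at h1
  obtain ⟨b, _, hb⟩ := Finset.exists_max_image univ (fun i => t i) hne
  refine ⟨b, le_antisymm (le_nMx t b) ((Finset.fold_max_le _).2 ⟨h0 b, fun l _ => hb l (mem_univ l)⟩)⟩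

lemma ndel_lt_nMx {U : Fin m → Set (EuclideanSpace ℝ (Fin N))}
    {t : EuclideanSpace ℝ (Fin m)} (h0 : ∀ i, 0 ≤ t i) (h1 : ∑ i, t i = 1) :
    ndel U < nMx t := by
  have hne : Nonempty (Fin m) := by
    by_contra hc
    rw [Finset.univ_eq_empty_iff.2 (not_nonempty_iff.1 hc)] at h1
    rw [Finset.sum_empty] at h1
    norm_num at h1
  have hm : (0:ℝ) < (m:ℝ) := by
    have := hne.some.pos
    exact_mod_cast this
  have hMx : 1 ≤ (m:ℝ) * nMx t := by
    calc (1:ℝ) = ∑ i, t i := h1.symm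
      _ ≤ ∑ _i : Fin m, nMx t := Finset.sum_le_sum (fun i _ => le_nMx t i)
      _ = (m:ℝ) * nMx t := by rw [Finset.sum_const, Finset.card_fin, nsmul_eq_mul]
  have h2 : 1 / (m:ℝ) ≤ nMx t := by
    rw [div_le_iff₀ hm]
    linarith [mul_comm (m:ℝ) (nMx t)]
  have h3 : ndel U ≤ 1 / (2 * ((m:ℝ) + 1)) := min_le_right _ _
  have h4 : 1 / (2 * ((m:ℝ) + 1)) < 1 / (m:ℝ) := by
    rw [div_lt_div_iff₀ (by positivity) hm]
    linarith
  linarith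

lemma real_props {U : Fin m → Set (EuclideanSpace ℝ (Fin N))} {t : EuclideanSpace ℝ (Fin m)}
    (ht : t ∈ nerveRealization U) :
    (∀ i, 0 ≤ t i) ∧ (∑ i, t i = 1) ∧ nsupp t ∈ nerve U := (mem_real_iff U t).1 ht

lemma nG_mem_star' {U : Fin m → Set (EuclideanSpace ℝ (Fin N))}
    (hconv : ∀ i, Convex ℝ (U i)) (hopen : ∀ i, IsOpen (U i))
    {t : EuclideanSpace ℝ (Fin m)} (ht : t ∈ nerveRealization U) {i : Fin m}
    (hi : nMx t - ndel U < t i) : nG U t ∈ U i := by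
  obtain ⟨h0, h1, hsupp⟩ := real_props ht
  exact nG_mem_star hconv hopen h0 h1 hsupp hi

lemma nG_mem_union {U : Fin m → Set (EuclideanSpace ℝ (Fin N))}
    (hconv : ∀ i, Convex ℝ (U i)) (hopen : ∀ i, IsOpen (U i))
    {t : EuclideanSpace ℝ (Fin m)} (ht : t ∈ nerveRealization U) :
    nG U t ∈ ⋃ i, U i := by
  obtain ⟨h0, h1, _⟩ := real_props ht
  obtain ⟨i, hi⟩ := exists_argmax h0 h1
  refine Set.mem_iUnion.2 ⟨i, nG_mem_star' hconv hopen ht ?_⟩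
  rw [hi]
  linarith [ndel_pos U]

/-! ### The squash map -/

def nZ (U : Fin m → Set (EuclideanSpace ℝ (Fin N))) (t : EuclideanSpace ℝ (Fin m)) : ℝ :=
  ∑ i, max (t i - (nMx t - ndel U)) 0

def nQv (U : Fin m → Set (EuclideanSpace ℝ (Fin N))) (t : EuclideanSpace ℝ (Fin m)) :
    EuclideanSpace ℝ (Fin m) :=
  (EuclideanSpace.equiv (Fin m) ℝ).symm
    (fun i => max (t i - (nMx t - ndel U)) 0 / nZ U t)

lemma nQv_apply (U : Fin m → Set (EuclideanSpace ℝ (Fin N))) (t : EuclideanSpace ℝ (Fin m))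
    (i : Fin m) : nQv U t i = max (t i - (nMx t - ndel U)) 0 / nZ U t := rfl

lemma nZ_pos {U : Fin m → Set (EuclideanSpace ℝ (Fin N))} {t : EuclideanSpace ℝ (Fin m)}
    (h0 : ∀ i, 0 ≤ t i) (h1 : ∑ i, t i = 1) : 0 < nZ U t := by
  obtain ⟨i, hi⟩ := exists_argmax h0 h1
  refine Finset.sum_pos' (fun j _ => le_max_right _ _) ⟨i, mem_univ i, ?_⟩
  rw [hi]
  have := ndel_pos U
  rw [lt_max_iff]
  left
  linarith

lemma nQv_nonneg (U : Fin m → Set (EuclideanSpace ℝ (Fin N)))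
    {t : EuclideanSpace ℝ (Fin m)} (h0 : ∀ i, 0 ≤ t i) (h1 : ∑ i, t i = 1) (i : Fin m) :
    0 ≤ nQv U t i := by
  rw [nQv_apply]
  exact div_nonneg (le_max_right _ _) (nZ_pos h0 h1).le

lemma nQv_sum {U : Fin m → Set (EuclideanSpace ℝ (Fin N))} {t : EuclideanSpace ℝ (Fin m)}
    (h0 : ∀ i, 0 ≤ t i) (h1 : ∑ i, t i = 1) : ∑ i, nQv U t i = 1 := by
  simp only [nQv_apply]
  rw [← Finset.sum_div]
  have hZ : ∑ i, max (t i - (nMx t - ndel U)) 0 = nZ U t := rfl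
  rw [hZ, div_self (ne_of_gt (nZ_pos h0 h1))]

lemma nQv_ne_zero_iff {U : Fin m → Set (EuclideanSpace ℝ (Fin N))}
    {t : EuclideanSpace ℝ (Fin m)} (h0 : ∀ i, 0 ≤ t i) (h1 : ∑ i, t i = 1) (i : Fin m) :
    nQv U t i ≠ 0 ↔ nMx t - ndel U < t i := by
  rw [nQv_apply, div_ne_zero_iff]
  constructor
  · rintro ⟨h, -⟩
    rcases lt_or_ge (nMx t - ndel U) (t i) with hlt | hle
    · exact hlt
    · exact absurd (max_eq_right (by linarith)) h
  · intro hlt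
    exact ⟨by rw [max_eq_left (by linarith)]; linarith, ne_of_gt (nZ_pos h0 h1)⟩

lemma continuous_nZ (U : Fin m → Set (EuclideanSpace ℝ (Fin N))) :
    Continuous fun t : EuclideanSpace ℝ (Fin m) => nZ U t := by
  refine continuous_finset_sum _ fun i _ => ?_
  exact ((continuous_coord i).sub (continuous_nMx.sub continuous_const)).max continuous_const

lemma comb_coord (a b : ℝ) (u v : EuclideanSpace ℝ (Fin m)) (i : Fin m) :
    (a • u + b • v) i = a * u i + b * v i := by
  rw [PiLp.add_apply, PiLp.smul_apply, PiLp.smul_apply, smul_eq_mul, smul_eq_mul]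

lemma comb_sum (a b : ℝ) (u v : EuclideanSpace ℝ (Fin m))
    (hu : ∑ i, u i = 1) (hv : ∑ i, v i = 1) : ∑ i, (a • u + b • v) i = a + b := by
  simp only [comb_coord]
  rw [Finset.sum_add_distrib, ← Finset.mul_sum, ← Finset.mul_sum, hu, hv, mul_one, mul_one]

lemma comb_ne_zero {a b : ℝ} {u v : EuclideanSpace ℝ (Fin m)} {i : Fin m}
    (hu : u i = 0) (hv : v i = 0) : (a • u + b • v) i = 0 := by
  rw [comb_coord, hu, hv, mul_zero, mul_zero, add_zero]

/-- membership of the first homotopy segment, in the realization -/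
lemma seg1_mem {U : Fin m → Set (EuclideanSpace ℝ (Fin N))}
    {t : EuclideanSpace ℝ (Fin m)} (ht : t ∈ nerveRealization U)
    {s : ℝ} (hs0 : 0 ≤ s) (hs1 : s ≤ 1) :
    (1 - s) • t + s • nQv U t ∈ nerveRealization U := by
  obtain ⟨h0, h1, hsupp⟩ := real_props ht
  obtain ⟨hne, x₀, hx₀⟩ := hsupp
  simp only [Set.mem_iInter] at hx₀
  have hQ0 := nQv_nonneg U h0 h1
  refine mem_real_of_witness (fun i => ?_) ?_ x₀ (fun j hj => ?_)
  · rw [comb_coord]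
    exact add_nonneg (mul_nonneg (by linarith) (h0 i)) (mul_nonneg hs0 (hQ0 i))
  · rw [comb_sum _ _ _ _ h1 (nQv_sum h0 h1)]; ring
  · have hj2 : t j ≠ 0 ∨ nQv U t j ≠ 0 := by
      by_contra hc
      push_neg at hc
      exact hj (comb_ne_zero hc.1 hc.2)
    have htj : t j ≠ 0 := by
      rcases hj2 with h | h
      · exact h
      · rw [nQv_ne_zero_iff h0 h1] at h
        have := ndel_lt_nMx (U := U) h0 h1
        intro hz
        rw [hz] at h
        linarith
    exact hx₀ j (by simp [nsupp, htj])

/-- membership of the second homotopy segment, in the realization -/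
lemma seg2_mem {U : Fin m → Set (EuclideanSpace ℝ (Fin N))}
    (hconv : ∀ i, Convex ℝ (U i)) (hopen : ∀ i, IsOpen (U i))
    {t : EuclideanSpace ℝ (Fin m)} (ht : t ∈ nerveRealization U)
    {s : ℝ} (hs0 : 0 ≤ s) (hs1 : s ≤ 1) :
    (1 - s) • nQv U t + s • nF U (nG U t) ∈ nerveRealization U := by
  obtain ⟨h0, h1, hsupp⟩ := real_props ht
  have hGU : nG U t ∈ ⋃ i, U i := nG_mem_union hconv hopen ht
  refine mem_real_of_witness (fun i => ?_) ?_ (nG U t) (fun j hj => ?_)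
  · rw [comb_coord]
    exact add_nonneg (mul_nonneg (by linarith) (nQv_nonneg U h0 h1 i))
      (mul_nonneg hs0 (nF_nonneg U _ i))
  · rw [comb_sum _ _ _ _ (nQv_sum h0 h1) (nF_sum hopen hGU)]; ring
  · have hj2 : nQv U t j ≠ 0 ∨ nF U (nG U t) j ≠ 0 := by
      by_contra hc
      push_neg at hc
      exact hj (comb_ne_zero hc.1 hc.2)
    rcases hj2 with h | h
    · exact nG_mem_star' hconv hopen ht ((nQv_ne_zero_iff h0 h1 j).1 h)
    · exact mem_of_nF_ne_zero h

lemma nQv_mem {U : Fin m → Set (EuclideanSpace ℝ (Fin N))}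
    {t : EuclideanSpace ℝ (Fin m)} (ht : t ∈ nerveRealization U) :
    nQv U t ∈ nerveRealization U := by
  have h := seg1_mem ht (zero_le_one (α := ℝ)) (le_refl 1)
  simpa using h

/-- membership of the X-side homotopy segment -/
lemma segX_mem {U : Fin m → Set (EuclideanSpace ℝ (Fin N))}
    (hconv : ∀ i, Convex ℝ (U i)) (hopen : ∀ i, IsOpen (U i))
    {x : EuclideanSpace ℝ (Fin N)} (hx : x ∈ ⋃ i, U i)
    {s : ℝ} (hs0 : 0 ≤ s) (hs1 : s ≤ 1) :
    (1 - s) • x + s • nG U (nF U x) ∈ ⋃ i, U i := by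
  have htF : nF U x ∈ nerveRealization U := nF_mem_real hopen hx
  obtain ⟨h0, h1, _⟩ := real_props htF
  obtain ⟨i, hi⟩ := exists_argmax h0 h1
  have hG : nG U (nF U x) ∈ U i := by
    refine nG_mem_star' hconv hopen htF ?_
    rw [hi]
    linarith [ndel_pos U]
  have hxU : x ∈ U i := by
    refine mem_of_nF_ne_zero (i := i) ?_
    have := ndel_lt_nMx (U := U) h0 h1
    rw [hi]
    intro hz
    rw [hz] at this
    linarith [ndel_pos U]
  exact Set.mem_iUnion.2 ⟨i, (hconv i) hxU hG (by linarith) hs0 (by ring)⟩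

end NerveAux


/-- The Nerve Theorem for convex covers: if `U_1, …, U_m` are convex open
subsets of `ℝ^N` covering `X = ⋃ U_i`, then `X` is homotopy equivalent to the
geometric realization of the nerve `N(U)`. -/
theorem nerve_theorem_of_convex_open {N m : ℕ}
    (U : Fin m → Set (EuclideanSpace ℝ (Fin N)))
    (hconv : ∀ i, Convex ℝ (U i)) (hopen : ∀ i, IsOpen (U i)) :
    Nonempty
      (ContinuousMap.HomotopyEquiv
        (⋃ i, U i : Set (EuclideanSpace ℝ (Fin N)))
        (nerveRealization U)) := by
  classical
  have hFcont : Continuous fun x : (⋃ i, U i : Set (EuclideanSpace ℝ (Fin N))) =>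
      nF U x.1 := by
    refine ((EuclideanSpace.equiv (Fin m) ℝ).symm.continuous).comp (continuous_pi fun i => ?_)
    exact ((continuous_ndd U i).comp continuous_subtype_val).div
      ((continuous_nS U).comp continuous_subtype_val)
      (fun x => (nS_pos hopen x.2).ne')
  have hQcont : Continuous fun t : (nerveRealization U : Set (EuclideanSpace ℝ (Fin m))) =>
      nQv U t.1 := by
    refine ((EuclideanSpace.equiv (Fin m) ℝ).symm.continuous).comp (continuous_pi fun i => ?_)
    refine Continuous.div ?_ ((continuous_nZ U).comp continuous_subtype_val) ?_
    · exact (((continuous_coord i).comp continuous_subtype_val).sub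
        ((continuous_nMx.comp continuous_subtype_val).sub continuous_const)).max
        continuous_const
    · intro t
      obtain ⟨h0, h1, _⟩ := real_props t.2
      exact (nZ_pos h0 h1).ne'
  let Fc : C((⋃ i, U i : Set (EuclideanSpace ℝ (Fin N))), (nerveRealization U)) :=
    ⟨fun x => ⟨nF U x.1, nF_mem_real hopen x.2⟩, hFcont.subtype_mk _⟩
  let Gc : C((nerveRealization U), (⋃ i, U i : Set (EuclideanSpace ℝ (Fin N)))) :=
    ⟨fun t => ⟨nG U t.1, nG_mem_union hconv hopen t.2⟩,
      ((continuous_nG U).comp continuous_subtype_val).subtype_mk _⟩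
  let Qc : C((nerveRealization U), (nerveRealization U)) :=
    ⟨fun t => ⟨nQv U t.1, nQv_mem t.2⟩, hQcont.subtype_mk _⟩
  -- homotopy on the X side
  have HX : (ContinuousMap.id _).Homotopy (Gc.comp Fc) := by
    refine ⟨⟨fun p => ⟨(1 - (p.1 : ℝ)) • (p.2 : EuclideanSpace ℝ (Fin N))
        + (p.1 : ℝ) • nG U (nF U p.2.1),
        segX_mem hconv hopen p.2.2 p.1.2.1 p.1.2.2⟩, ?_⟩, ?_, ?_⟩
    · refine Continuous.subtype_mk ?_ _
      refine Continuous.add ?_ ?_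
      · exact (continuous_const.sub
          (continuous_subtype_val.comp continuous_fst)).smul
          (continuous_subtype_val.comp continuous_snd)
      · exact (continuous_subtype_val.comp continuous_fst).smul
          ((continuous_nG U).comp (hFcont.comp continuous_snd))
    · intro x
      apply Subtype.ext
      show (1 - ((0 : unitInterval) : ℝ)) • _ + ((0 : unitInterval) : ℝ) • _ = _
      simp
    · intro x
      apply Subtype.ext
      show (1 - ((1 : unitInterval) : ℝ)) • _ + ((1 : unitInterval) : ℝ) • _ = _
      simp
      rfl
  -- homotopies on the nerve side
  have HK1 : (ContinuousMap.id _).Homotopy Qc := by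
    refine ⟨⟨fun p => ⟨(1 - (p.1 : ℝ)) • (p.2 : EuclideanSpace ℝ (Fin m))
        + (p.1 : ℝ) • nQv U p.2.1,
        seg1_mem p.2.2 p.1.2.1 p.1.2.2⟩, ?_⟩, ?_, ?_⟩
    · refine Continuous.subtype_mk ?_ _
      refine Continuous.add ?_ ?_
      · exact (continuous_const.sub
          (continuous_subtype_val.comp continuous_fst)).smul
          (continuous_subtype_val.comp continuous_snd)
      · exact (continuous_subtype_val.comp continuous_fst).smul
          (hQcont.comp continuous_snd)
    · intro t
      apply Subtype.ext
      show (1 - ((0 : unitInterval) : ℝ)) • _ + ((0 : unitInterval) : ℝ) • _ = _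
      simp
    · intro t
      apply Subtype.ext
      show (1 - ((1 : unitInterval) : ℝ)) • _ + ((1 : unitInterval) : ℝ) • _ = _
      simp
      rfl
  have HK2 : Qc.Homotopy (Fc.comp Gc) := by
    refine ⟨⟨fun p => ⟨(1 - (p.1 : ℝ)) • nQv U p.2.1
        + (p.1 : ℝ) • nF U (nG U p.2.1),
        seg2_mem hconv hopen p.2.2 p.1.2.1 p.1.2.2⟩, ?_⟩, ?_, ?_⟩
    · refine Continuous.subtype_mk ?_ _
      refine Continuous.add ?_ ?_
      · exact (continuous_const.sub
          (continuous_subtype_val.comp continuous_fst)).smul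
          (hQcont.comp continuous_snd)
      · have hnGp : Continuous fun p :
            unitInterval × (nerveRealization U : Set (EuclideanSpace ℝ (Fin m))) =>
            nG U p.2.1 := (continuous_nG U).comp (continuous_subtype_val.comp continuous_snd)
        have hFG : Continuous fun p :
            unitInterval × (nerveRealization U : Set (EuclideanSpace ℝ (Fin m))) =>
            nF U (nG U p.2.1) := by
          refine ((EuclideanSpace.equiv (Fin m) ℝ).symm.continuous).comp
            (continuous_pi fun i => ?_)
          exact ((continuous_ndd U i).comp hnGp).div ((continuous_nS U).comp hnGp)
            (fun p => (nS_pos hopen (nG_mem_union hconv hopen p.2.2)).ne')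
        exact (continuous_subtype_val.comp continuous_fst).smul hFG
    · intro t
      apply Subtype.ext
      show (1 - ((0 : unitInterval) : ℝ)) • _ + ((0 : unitInterval) : ℝ) • _ = _
      simp
      rfl
    · intro t
      apply Subtype.ext
      show (1 - ((1 : unitInterval) : ℝ)) • _ + ((1 : unitInterval) : ℝ) • _ = _
      simp
      rfl
  exact ⟨{ toFun := Fc, invFun := Gc,
           left_inv := ⟨HX.symm⟩,
           right_inv := ⟨(HK1.trans HK2).symm⟩ }⟩
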